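/- arXiv:2207.09104 — 5 statements merged into one kernel-verified Lean document; each statement's English description precedes it below -/
import Mathlib

section
/- For every continuous function u : [α₀, ξ] → ℝ and every η ∈ [α₀, ξ], one has (α₀^ν/(2 L_M))·exp((N_M/(a L_m))·α₀²)·(N_M/(a L_m))^{(ν−1)/2}·[γ((1−ν)/2, η²·N_M/(a L_m)) − γ((1−ν)/2, α₀²·N_M/(a L_m))] ≤ Φ(η,u) ≤ (α₀^ν/(2 L_m))·exp((N_m/(a L_M))·α₀²)·(N_m/(a L_M))^{(ν−1)/2}·[γ((1−ν)/2, η²·N_m/(a L_M)) − γ((1−ν)/2, α₀²·N_m/(a L_M))]. -/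
open Real MeasureTheory Set

/-- `E(η,u) = exp(−(2/a)·∫_{α₀}^{η} s·N*(u(s))/L*(u(s)) ds)` -/
noncomputable def Efun (a : ℝ) (L N : ℝ → ℝ) (α₀ : ℝ) (u : ℝ → ℝ) (η : ℝ) : ℝ :=
  Real.exp (-(2 / a) * ∫ s in α₀..η, s * N (u s) / L (u s))

/-- `Φ(η,u) = α₀^ν·∫_{α₀}^{η} E(v,u)/(v^ν·L*(u(v))) dv` -/
noncomputable def Phi (a ν : ℝ) (L N : ℝ → ℝ) (α₀ : ℝ) (u : ℝ → ℝ) (η : ℝ) : ℝ :=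
  α₀ ^ ν * ∫ v in α₀..η, Efun a L N α₀ u v / (v ^ ν * L (u v))

/-- Lower incomplete gamma function `γ(s,x) = ∫₀ˣ t^{s−1} e^{−t} dt`. -/
noncomputable def lowerGamma (s x : ℝ) : ℝ :=
  ∫ t in (0 : ℝ)..x, t ^ (s - 1) * Real.exp (-t)

lemma lowerGamma_diff {s : ℝ} (hs : 0 < s) (x y : ℝ) :
    lowerGamma s y - lowerGamma s x = ∫ t in x..y, t ^ (s - 1) * Real.exp (-t) := by
  have hint : ∀ p q : ℝ,
      IntervalIntegrable (fun t => t ^ (s - 1) * Real.exp (-t)) volume p q := fun p q =>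
    (intervalIntegral.intervalIntegrable_rpow' (by linarith)).mul_continuousOn
      (Continuous.continuousOn (by continuity))
  rw [lowerGamma, lowerGamma,
    ← intervalIntegral.integral_add_adjacent_intervals (hint 0 x) (hint x y)]
  ring

lemma key_integral {c ν A B : ℝ} (hc : 0 < c) (hν : ν < 1) (hA : 0 < A) (hAB : A ≤ B) :
    ∫ v in A..B, v ^ (-ν) * Real.exp (-(c * v ^ 2)) =
      (1 / 2) * c ^ ((ν - 1) / 2) *
        (lowerGamma ((1 - ν) / 2) (B ^ 2 * c) - lowerGamma ((1 - ν) / 2) (A ^ 2 * c)) := by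
  have hicc : uIcc A B = Icc A B := uIcc_of_le hAB
  have hpos : ∀ x ∈ uIcc A B, 0 < x := by
    intro x hx; rw [hicc] at hx; exact hA.trans_le hx.1
  have hsub : ∫ x in A..B, (2 * c * x) •
      ((fun t => t ^ (-(1 + ν) / 2) * Real.exp (-t)) ∘ (fun v => c * v ^ 2)) x =
      ∫ t in (c * A ^ 2)..(c * B ^ 2), t ^ (-(1 + ν) / 2) * Real.exp (-t) := by
    apply intervalIntegral.integral_comp_smul_deriv'
    · intro x _
      have h := (hasDerivAt_pow 2 x).const_mul c
      refine h.congr_deriv ?_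
      push_cast; ring
    · exact (continuous_const.mul continuous_id).continuousOn
    · apply ContinuousOn.mono
        (s := {t : ℝ | 0 < t})
      · exact (ContinuousOn.rpow_const continuousOn_id
          (fun t ht => Or.inl (ne_of_gt ht))).mul
          ((Real.continuous_exp.comp continuous_neg).continuousOn)
      · rintro t ⟨x, hx, rfl⟩
        exact mul_pos hc (pow_pos (hpos x hx) 2)
  have hLHS : ∫ x in A..B, (2 * c * x) •
      ((fun t => t ^ (-(1 + ν) / 2) * Real.exp (-t)) ∘ (fun v => c * v ^ 2)) x =
      (2 * c ^ ((1 - ν) / 2)) * ∫ v in A..B, v ^ (-ν) * Real.exp (-(c * v ^ 2)) := by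
    rw [← intervalIntegral.integral_const_mul]
    apply intervalIntegral.integral_congr
    intro x hx
    have hx0 : 0 < x := hpos x hx
    have h1 : (c * x ^ 2) ^ (-(1 + ν) / 2) =
        c ^ (-(1 + ν) / 2) * x ^ (-(1 + ν)) := by
      rw [Real.mul_rpow hc.le (sq_nonneg x), ← Real.rpow_natCast x 2,
        ← Real.rpow_mul hx0.le]
      congr 1
      push_cast; ring
    simp only [Function.comp, smul_eq_mul]
    rw [h1]
    have h2 : x * x ^ (-(1 + ν)) = x ^ (-ν) := by
      rw [show (-ν) = 1 + -(1 + ν) by ring, Real.rpow_add hx0, Real.rpow_one]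
    have h3 : c * c ^ (-(1 + ν) / 2) = c ^ ((1 - ν) / 2) := by
      nth_rewrite 1 [← Real.rpow_one c]
      rw [← Real.rpow_add hc]
      congr 1
      ring
    calc 2 * c * x * ((c ^ (-(1 + ν) / 2) * x ^ (-(1 + ν))) * Real.exp (-(c * x ^ 2)))
        = 2 * (c * c ^ (-(1 + ν) / 2)) * ((x * x ^ (-(1 + ν))) * Real.exp (-(c * x ^ 2))) := by
          ring
      _ = 2 * c ^ ((1 - ν) / 2) * (x ^ (-ν) * Real.exp (-(c * x ^ 2))) := by rw [h2, h3]
  have hgam : lowerGamma ((1 - ν) / 2) (B ^ 2 * c) - lowerGamma ((1 - ν) / 2) (A ^ 2 * c) =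
      ∫ t in (c * A ^ 2)..(c * B ^ 2), t ^ (-(1 + ν) / 2) * Real.exp (-t) := by
    rw [lowerGamma_diff (by linarith [hν] : (0:ℝ) < (1 - ν) / 2)]
    rw [mul_comm (A ^ 2) c, mul_comm (B ^ 2) c,
      show (1 - ν) / 2 - 1 = -(1 + ν) / 2 by ring]
  have hcp : c ^ ((ν - 1) / 2) = (c ^ ((1 - ν) / 2))⁻¹ := by
    rw [← Real.rpow_neg hc.le]
    congr 1
    ring
  have hcpos : (0:ℝ) < c ^ ((1 - ν) / 2) := Real.rpow_pos_of_pos hc _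
  rw [hgam, ← hsub, hLHS, hcp]
  field_simp

lemma model_contOn {c K ν A B : ℝ} (hK : 0 < K) (hA : 0 < A) (hAB : A ≤ B) :
    ContinuousOn (fun v => Real.exp (-(c * (v ^ 2 - A ^ 2))) / (v ^ ν * K)) (uIcc A B) := by
  have hpos : ∀ x ∈ uIcc A B, 0 < x := by
    intro x hx; rw [uIcc_of_le hAB] at hx; exact hA.trans_le hx.1
  apply ContinuousOn.div
  · exact (Real.continuous_exp.comp (by continuity)).continuousOn
  · exact (ContinuousOn.rpow_const continuousOn_id
      (fun x hx => Or.inl (hpos x hx).ne')).mul continuousOn_const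
  · intro x hx
    exact (mul_pos (Real.rpow_pos_of_pos (hpos x hx) ν) hK).ne'

lemma model_eval {c K ν A B : ℝ} (hc : 0 < c) (hK : 0 < K) (hν : ν < 1)
    (hA : 0 < A) (hAB : A ≤ B) :
    ∫ v in A..B, Real.exp (-(c * (v ^ 2 - A ^ 2))) / (v ^ ν * K) =
      Real.exp (c * A ^ 2) / K * ((1 / 2) * c ^ ((ν - 1) / 2) *
        (lowerGamma ((1 - ν) / 2) (B ^ 2 * c) - lowerGamma ((1 - ν) / 2) (A ^ 2 * c))) := by
  have hpos : ∀ x ∈ uIcc A B, 0 < x := by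
    intro x hx; rw [uIcc_of_le hAB] at hx; exact hA.trans_le hx.1
  have hcongr : ∀ x ∈ uIcc A B,
      Real.exp (-(c * (x ^ 2 - A ^ 2))) / (x ^ ν * K) =
        Real.exp (c * A ^ 2) / K * (x ^ (-ν) * Real.exp (-(c * x ^ 2))) := by
    intro x hx
    have hx0 : 0 < x := hpos x hx
    have hxν : (0:ℝ) < x ^ ν := Real.rpow_pos_of_pos hx0 ν
    rw [Real.rpow_neg hx0.le,
      show -(c * (x ^ 2 - A ^ 2)) = c * A ^ 2 + -(c * x ^ 2) by ring, Real.exp_add]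
    field_simp
  rw [intervalIntegral.integral_congr hcongr, intervalIntegral.integral_const_mul,
    key_integral hc hν hA hAB]

theorem stmt_1 (a ν α₀ ξ : ℝ) (L N : ℝ → ℝ) (Lm LM Nm NM : ℝ)
    (ha : 0 < a) (hν0 : 0 < ν) (hν1 : ν < 1) (hα₀ : 0 < α₀) (hαξ : α₀ < ξ)
    (hLcont : Continuous L) (hNcont : Continuous N)
    (hLm : 0 < Lm) (hNm : 0 < Nm)
    (hL : ∀ x : ℝ, Lm ≤ L x ∧ L x ≤ LM)
    (hN : ∀ x : ℝ, Nm ≤ N x ∧ N x ≤ NM) :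
    ∀ u : ℝ → ℝ, ContinuousOn u (Icc α₀ ξ) → ∀ η ∈ Icc α₀ ξ,
      (α₀ ^ ν / (2 * LM)) * Real.exp ((NM / (a * Lm)) * α₀ ^ 2) *
          (NM / (a * Lm)) ^ ((ν - 1) / 2) *
          (lowerGamma ((1 - ν) / 2) (η ^ 2 * (NM / (a * Lm))) -
            lowerGamma ((1 - ν) / 2) (α₀ ^ 2 * (NM / (a * Lm)))) ≤
        Phi a ν L N α₀ u η ∧
      Phi a ν L N α₀ u η ≤
        (α₀ ^ ν / (2 * Lm)) * Real.exp ((Nm / (a * LM)) * α₀ ^ 2) *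
          (Nm / (a * LM)) ^ ((ν - 1) / 2) *
          (lowerGamma ((1 - ν) / 2) (η ^ 2 * (Nm / (a * LM))) -
            lowerGamma ((1 - ν) / 2) (α₀ ^ 2 * (Nm / (a * LM)))) := by
  intro u hu η hη
  obtain ⟨hαη, hηξ⟩ := hη
  have hLM : 0 < LM := hLm.trans_le ((hL 0).1.trans (hL 0).2)
  have hNM : 0 < NM := hNm.trans_le ((hN 0).1.trans (hN 0).2)
  have hcm : (0:ℝ) < Nm / (a * LM) := by positivity
  have hcM : (0:ℝ) < NM / (a * Lm) := by positivity
  have hsubξ : Icc α₀ η ⊆ Icc α₀ ξ := Icc_subset_Icc_right hηξ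
  have huIcc : uIcc α₀ η = Icc α₀ η := uIcc_of_le hαη
  -- continuity of inner integrand
  have hhcont : ContinuousOn (fun s => s * N (u s) / L (u s)) (Icc α₀ ξ) :=
    (continuousOn_id.mul (hNcont.comp_continuousOn hu)).div
      (hLcont.comp_continuousOn hu)
      (fun x _ => (hLm.trans_le (hL (u x)).1).ne')
  -- bounds on inner integral
  have hIbound : ∀ v ∈ Icc α₀ η,
      (Nm / LM) * ((v ^ 2 - α₀ ^ 2) / 2) ≤ (∫ s in α₀..v, s * N (u s) / L (u s)) ∧
      (∫ s in α₀..v, s * N (u s) / L (u s)) ≤ (NM / Lm) * ((v ^ 2 - α₀ ^ 2) / 2) := by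
    intro v hv
    have hαv : α₀ ≤ v := hv.1
    have hsub2 : uIcc α₀ v ⊆ Icc α₀ ξ := by
      rw [uIcc_of_le hαv]; exact Icc_subset_Icc_right (hv.2.trans hηξ)
    have hint : IntervalIntegrable (fun s => s * N (u s) / L (u s)) volume α₀ v :=
      (hhcont.mono hsub2).intervalIntegrable
    have e1 : ∀ k : ℝ, (∫ s in α₀..v, s * k) = k * ((v ^ 2 - α₀ ^ 2) / 2) := by
      intro k; rw [intervalIntegral.integral_mul_const, integral_id]; ring
    constructor
    · rw [← e1]
      apply intervalIntegral.integral_mono_on hαv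
        ((continuous_id.mul continuous_const).intervalIntegrable _ _) hint
      intro s hs
      have hs0 : (0:ℝ) ≤ s := hα₀.le.trans hs.1
      rw [mul_div_assoc]
      exact mul_le_mul_of_nonneg_left
        (div_le_div₀ (hNm.trans_le (hN (u s)).1).le (hN (u s)).1
          (hLm.trans_le (hL (u s)).1) (hL (u s)).2) hs0
    · rw [← e1]
      apply intervalIntegral.integral_mono_on hαv hint
        ((continuous_id.mul continuous_const).intervalIntegrable _ _)
      intro s hs
      have hs0 : (0:ℝ) ≤ s := hα₀.le.trans hs.1
      rw [mul_div_assoc]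
      exact mul_le_mul_of_nonneg_left
        (div_le_div₀ hNM.le (hN (u s)).2 hLm (hL (u s)).1) hs0
  -- bounds on Efun
  have hE : ∀ v ∈ Icc α₀ η,
      Real.exp (-(NM / (a * Lm) * (v ^ 2 - α₀ ^ 2))) ≤ Efun a L N α₀ u v ∧
      Efun a L N α₀ u v ≤ Real.exp (-(Nm / (a * LM) * (v ^ 2 - α₀ ^ 2))) := by
    intro v hv
    obtain ⟨h1, h2⟩ := hIbound v hv
    have h2a : (0:ℝ) < 2 / a := by positivity
    have key1 := mul_le_mul_of_nonneg_left h1 h2a.le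
    have key2 := mul_le_mul_of_nonneg_left h2 h2a.le
    have heq1 : 2 / a * ((Nm / LM) * ((v ^ 2 - α₀ ^ 2) / 2)) =
        Nm / (a * LM) * (v ^ 2 - α₀ ^ 2) := by field_simp
    have heq2 : 2 / a * ((NM / Lm) * ((v ^ 2 - α₀ ^ 2) / 2)) =
        NM / (a * Lm) * (v ^ 2 - α₀ ^ 2) := by field_simp
    unfold Efun
    constructor
    · apply Real.exp_le_exp.mpr; nlinarith [key2, heq2]
    · apply Real.exp_le_exp.mpr; nlinarith [key1, heq1]
  -- pointwise bounds on the Phi integrand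
  have hbound : ∀ v ∈ Icc α₀ η,
      Real.exp (-(NM / (a * Lm) * (v ^ 2 - α₀ ^ 2))) / (v ^ ν * LM) ≤
        Efun a L N α₀ u v / (v ^ ν * L (u v)) ∧
      Efun a L N α₀ u v / (v ^ ν * L (u v)) ≤
        Real.exp (-(Nm / (a * LM) * (v ^ 2 - α₀ ^ 2))) / (v ^ ν * Lm) := by
    intro v hv
    have hv0 : 0 < v := hα₀.trans_le hv.1
    have hvν : (0:ℝ) < v ^ ν := Real.rpow_pos_of_pos hv0 ν
    obtain ⟨hE1, hE2⟩ := hE v hv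
    constructor
    · refine div_le_div₀ (le_of_lt (by unfold Efun; exact Real.exp_pos _)) hE1
        (mul_pos hvν (hLm.trans_le (hL (u v)).1))
        (mul_le_mul_of_nonneg_left (hL (u v)).2 hvν.le)
    · exact div_le_div₀ (Real.exp_pos _).le hE2 (mul_pos hvν hLm)
        (mul_le_mul_of_nonneg_left (hL (u v)).1 hvν.le)
  -- integrability of the Phi integrand
  have hIOn : IntegrableOn (fun s => s * N (u s) / L (u s)) (uIcc α₀ η) volume := by
    rw [huIcc]; exact (hhcont.mono hsubξ).integrableOn_Icc
  have hIc : ContinuousOn (fun v => ∫ s in α₀..v, s * N (u s) / L (u s)) (Icc α₀ η) := by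
    rw [← huIcc]; exact intervalIntegral.continuousOn_primitive_interval hIOn
  have hEcont : ContinuousOn (fun v => Efun a L N α₀ u v) (Icc α₀ η) := by
    simp only [Efun]
    exact Real.continuous_exp.comp_continuousOn (continuousOn_const.mul hIc)
  have hmid_cont : ContinuousOn
      (fun v => Efun a L N α₀ u v / (v ^ ν * L (u v))) (Icc α₀ η) := by
    apply hEcont.div
    · exact (ContinuousOn.rpow_const continuousOn_id
        (fun x hx => Or.inl (hα₀.trans_le hx.1).ne')).mul
        (hLcont.comp_continuousOn (hu.mono hsubξ))
    · intro x hx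
      exact (mul_pos (Real.rpow_pos_of_pos (hα₀.trans_le hx.1) ν)
        (hLm.trans_le (hL (u x)).1)).ne'
  have hmid_int : IntervalIntegrable
      (fun v => Efun a L N α₀ u v / (v ^ ν * L (u v))) volume α₀ η :=
    ContinuousOn.intervalIntegrable (by rw [huIcc]; exact hmid_cont)
  have hαν : (0:ℝ) ≤ α₀ ^ ν := (Real.rpow_pos_of_pos hα₀ ν).le
  constructor
  · -- lower bound
    have hInt := intervalIntegral.integral_mono_on hαη
      ((model_contOn (c := NM / (a * Lm)) (K := LM) (ν := ν) hLM hα₀ hαη).intervalIntegrable)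
      hmid_int (fun v hv => (hbound v hv).1)
    have heval := model_eval (c := NM / (a * Lm)) (K := LM) (ν := ν) hcM hLM hν1 hα₀ hαη
    unfold Phi
    refine le_trans (le_of_eq ?_) (mul_le_mul_of_nonneg_left hInt hαν)
    rw [heval]; ring
  · -- upper bound
    have hInt := intervalIntegral.integral_mono_on hαη hmid_int
      ((model_contOn (c := Nm / (a * LM)) (K := Lm) (ν := ν) hLm hα₀ hαη).intervalIntegrable)
      (fun v hv => (hbound v hv).2)
    have heval := model_eval (c := Nm / (a * LM)) (K := Lm) (ν := ν) hcm hLm hν1 hα₀ hαη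
    unfold Phi
    refine le_trans (mul_le_mul_of_nonneg_left hInt hαν) (le_of_eq ?_)
    rw [heval]; ring
end

section
/- For all continuous functions u, u* : [α₀, ξ] → ℝ and every η ∈ [α₀, ξ], one has |E(η,u) − E(η,u*)| ≤ (1/(a·L_m))·(Ñ + N_M·L̃/L_m)·(η² − α₀²)·‖u − u*‖, where ‖·‖ denotes the supremum norm on [α₀, ξ]. -/
open Real MeasureTheory Set

/-- Supremum norm on the interval `[α₀, ξ]`. -/
noncomputable def supNorm (α₀ ξ : ℝ) (f : ℝ → ℝ) : ℝ :=
  ⨆ η : Icc α₀ ξ, |f η|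

lemma exp_neg_lip (x y : ℝ) (hx : 0 ≤ x) (hy : 0 ≤ y) :
    |Real.exp (-x) - Real.exp (-y)| ≤ |x - y| := by
  have key : ∀ p q : ℝ, 0 ≤ p → p ≤ q → Real.exp (-p) - Real.exp (-q) ≤ q - p := by
    intro p q hp hpq
    have h1 : Real.exp (-p) ≤ 1 := Real.exp_le_one_iff.mpr (by linarith)
    have h2 : (p - q) + 1 ≤ Real.exp (p - q) := Real.add_one_le_exp _
    have h3 : Real.exp (-p) - Real.exp (-q) = Real.exp (-p) * (1 - Real.exp (p - q)) := by
      rw [mul_sub, mul_one, ← Real.exp_add]; ring_nf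
    have h4 : 0 ≤ 1 - Real.exp (p - q) := by
      have : Real.exp (p - q) ≤ 1 := Real.exp_le_one_iff.mpr (by linarith)
      linarith
    calc Real.exp (-p) - Real.exp (-q) = Real.exp (-p) * (1 - Real.exp (p - q)) := h3
      _ ≤ 1 * (1 - Real.exp (p - q)) := mul_le_mul_of_nonneg_right h1 h4
      _ ≤ q - p := by linarith
  rcases le_total x y with h | h
  · have h1 := key x y hx h
    have h2 : Real.exp (-y) ≤ Real.exp (-x) := Real.exp_le_exp.mpr (by linarith)
    rw [abs_of_nonneg (by linarith), abs_of_nonpos (by linarith)]; linarith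
  · have h1 := key y x hy h
    have h2 : Real.exp (-x) ≤ Real.exp (-y) := Real.exp_le_exp.mpr (by linarith)
    rw [abs_of_nonpos (by linarith), abs_of_nonneg (by linarith)]; linarith

theorem stmt_2 (a ν α₀ ξ : ℝ) (L N : ℝ → ℝ) (Lm LM Nm NM Ltil Ntil : ℝ)
    (ha : 0 < a) (hν0 : 0 < ν) (hν1 : ν < 1) (hα₀ : 0 < α₀) (hαξ : α₀ < ξ)
    (hLcont : Continuous L) (hNcont : Continuous N)
    (hLm : 0 < Lm) (hNm : 0 < Nm) (hLtil : 0 < Ltil) (hNtil : 0 < Ntil)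
    (hL : ∀ x : ℝ, Lm ≤ L x ∧ L x ≤ LM)
    (hN : ∀ x : ℝ, Nm ≤ N x ∧ N x ≤ NM)
    (hLlip : ∀ x y : ℝ, |L x - L y| ≤ Ltil * |x - y|)
    (hNlip : ∀ x y : ℝ, |N x - N y| ≤ Ntil * |x - y|) :
    ∀ u ustar : ℝ → ℝ, ContinuousOn u (Icc α₀ ξ) → ContinuousOn ustar (Icc α₀ ξ) →
      ∀ η ∈ Icc α₀ ξ,
        |Efun a L N α₀ u η - Efun a L N α₀ ustar η| ≤
          (1 / (a * Lm)) * (Ntil + NM * Ltil / Lm) * (η ^ 2 - α₀ ^ 2) *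
            supNorm α₀ ξ (fun x => u x - ustar x) := by
  intro u us hu hus η hη
  obtain ⟨hηa, hηξ⟩ := hη
  set M := supNorm α₀ ξ (fun x => u x - us x) with hMdef
  -- sup norm bounds
  have hbdd : BddAbove (Set.range fun x : Icc α₀ ξ => |u x - us x|) := by
    have h := (isCompact_Icc.image_of_continuousOn ((hu.sub hus).abs)).bddAbove
    rwa [Set.image_eq_range] at h
  have hM : ∀ x ∈ Icc α₀ ξ, |u x - us x| ≤ M := by
    intro x hx
    exact le_ciSup hbdd (⟨x, hx⟩ : Icc α₀ ξ)
  have hM0 : 0 ≤ M :=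
    le_trans (abs_nonneg _) (hM α₀ ⟨le_rfl, le_of_lt hαξ⟩)
  have hNM : 0 < NM := lt_of_lt_of_le (lt_of_lt_of_le hNm (hN 0).1) (hN 0).2
  set C := Ntil / Lm + NM * Ltil / Lm ^ 2 with hCdef
  have hC0 : 0 ≤ C :=
    add_nonneg (by positivity) (div_nonneg (mul_nonneg hNM.le hLtil.le) (by positivity))
  have hLpos : ∀ x, 0 < L x := fun x => lt_of_lt_of_le hLm (hL x).1
  have hNpos : ∀ x, 0 < N x := fun x => lt_of_lt_of_le hNm (hN x).1
  -- quotient Lipschitz bound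
  have key : ∀ x y : ℝ, |N x / L x - N y / L y| ≤ C * |x - y| := by
    intro x y
    have hLx := hLpos x
    have hLy := hLpos y
    have heq : N x / L x - N y / L y
        = (N x - N y) / L x + N y * (L y - L x) / (L x * L y) := by
      field_simp; ring
    have h1 : |(N x - N y) / L x| ≤ Ntil * |x - y| / Lm := by
      rw [abs_div, abs_of_pos hLx]
      exact div_le_div₀ (by positivity) (hNlip x y) hLm (hL x).1
    have h2 : |N y * (L y - L x) / (L x * L y)| ≤ NM * (Ltil * |x - y|) / Lm ^ 2 := by
      rw [abs_div, abs_mul, abs_of_pos (by positivity : (0:ℝ) < L x * L y),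
        abs_of_pos (hNpos y)]
      have hnum : N y * |L y - L x| ≤ NM * (Ltil * |x - y|) := by
        have := hLlip y x
        have hNy := (hN y).2
        have : N y * |L y - L x| ≤ NM * (Ltil * |y - x|) := by
          apply mul_le_mul hNy (hLlip y x) (abs_nonneg _) hNM.le
        rwa [abs_sub_comm y x] at this
      exact div_le_div₀ (mul_nonneg hNM.le (by positivity)) hnum (by positivity)
        (by nlinarith [(hL x).1, (hL y).1])
    calc |N x / L x - N y / L y|
        = |(N x - N y) / L x + N y * (L y - L x) / (L x * L y)| := by rw [heq]
      _ ≤ |(N x - N y) / L x| + |N y * (L y - L x) / (L x * L y)| := abs_add_le _ _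
      _ ≤ Ntil * |x - y| / Lm + NM * (Ltil * |x - y|) / Lm ^ 2 := add_le_add h1 h2
      _ = C * |x - y| := by rw [hCdef]; ring
  -- continuity/integrability of integrands
  have hsub : Icc α₀ η ⊆ Icc α₀ ξ := Icc_subset_Icc le_rfl hηξ
  have hcont : ∀ v : ℝ → ℝ, ContinuousOn v (Icc α₀ ξ) →
      ContinuousOn (fun s => s * N (v s) / L (v s)) (Icc α₀ η) := by
    intro v hv
    have hv' : ContinuousOn v (Icc α₀ η) := hv.mono hsub
    exact (continuousOn_id.mul (hNcont.comp_continuousOn hv')).div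
      (hLcont.comp_continuousOn hv') (fun x _ => ne_of_gt (hLpos (v x)))
  have hint : ∀ v : ℝ → ℝ, ContinuousOn v (Icc α₀ ξ) →
      IntervalIntegrable (fun s => s * N (v s) / L (v s)) volume α₀ η := by
    intro v hv
    have h : ContinuousOn (fun s => s * N (v s) / L (v s)) (uIcc α₀ η) := by
      rw [uIcc_of_le hηa]; exact hcont v hv
    exact h.intervalIntegrable
  have hintu := hint u hu
  have hintus := hint us hus
  -- nonnegativity of integrals
  have hnonneg : ∀ v : ℝ → ℝ, 0 ≤ ∫ s in α₀..η, s * N (v s) / L (v s) := by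
    intro v
    apply intervalIntegral.integral_nonneg hηa
    intro s hs
    have hs0 : 0 < s := lt_of_lt_of_le hα₀ hs.1
    exact div_nonneg (mul_nonneg hs0.le (hNpos _).le) (hLpos _).le
  set X := ∫ s in α₀..η, s * N (u s) / L (u s) with hX
  set Y := ∫ s in α₀..η, s * N (us s) / L (us s) with hY
  have h2a : 0 ≤ 2 / a := by positivity
  -- main exp bound
  have hexp : |Efun a L N α₀ u η - Efun a L N α₀ us η| ≤ (2 / a) * |X - Y| := by
    have := exp_neg_lip ((2 / a) * X) ((2 / a) * Y)
      (mul_nonneg h2a (hnonneg u)) (mul_nonneg h2a (hnonneg us))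
    simp only [Efun, neg_mul] at *
    calc |Real.exp (-(2 / a * X)) - Real.exp (-(2 / a * Y))|
        ≤ |2 / a * X - 2 / a * Y| := this
      _ = (2 / a) * |X - Y| := by rw [← mul_sub, abs_mul, abs_of_nonneg h2a]
  -- bound on |X - Y|
  have hXY : |X - Y| ≤ C * M * ((η ^ 2 - α₀ ^ 2) / 2) := by
    have hdiff : X - Y = ∫ s in α₀..η,
        (s * N (u s) / L (u s) - s * N (us s) / L (us s)) :=
      (intervalIntegral.integral_sub hintu hintus).symm
    rw [hdiff]
    have hbound : ∀ s ∈ Set.Icc α₀ η,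
        ‖s * N (u s) / L (u s) - s * N (us s) / L (us s)‖ ≤ C * M * s := by
      intro s hs
      have hs0 : 0 ≤ s := le_trans (le_of_lt hα₀) hs.1
      have : s * N (u s) / L (u s) - s * N (us s) / L (us s)
          = s * (N (u s) / L (u s) - N (us s) / L (us s)) := by ring
      rw [Real.norm_eq_abs, this, abs_mul, abs_of_nonneg hs0]
      have h1 : |N (u s) / L (u s) - N (us s) / L (us s)| ≤ C * |u s - us s| :=
        key (u s) (us s)
      have h2 : |u s - us s| ≤ M := hM s (hsub hs)
      calc s * |N (u s) / L (u s) - N (us s) / L (us s)|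
          ≤ s * (C * M) := by
            apply mul_le_mul_of_nonneg_left _ hs0
            exact le_trans h1 (mul_le_mul_of_nonneg_left h2 hC0)
        _ = C * M * s := by ring
    have hintid : IntervalIntegrable (fun s => C * M * s) volume α₀ η :=
      (continuous_const.mul continuous_id).intervalIntegrable _ _
    calc |∫ s in α₀..η, (s * N (u s) / L (u s) - s * N (us s) / L (us s))|
        ≤ ∫ s in α₀..η, |s * N (u s) / L (u s) - s * N (us s) / L (us s)| :=
          intervalIntegral.abs_integral_le_integral_abs hηa
      _ ≤ ∫ s in α₀..η, C * M * s := by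
          apply intervalIntegral.integral_mono_on hηa (hintu.sub hintus).abs hintid
          intro s hs
          simpa [Real.norm_eq_abs] using hbound s hs
      _ = C * M * ((η ^ 2 - α₀ ^ 2) / 2) := by
          rw [intervalIntegral.integral_const_mul, integral_id]
  calc |Efun a L N α₀ u η - Efun a L N α₀ us η|
      ≤ (2 / a) * |X - Y| := hexp
    _ ≤ (2 / a) * (C * M * ((η ^ 2 - α₀ ^ 2) / 2)) :=
        mul_le_mul_of_nonneg_left hXY h2a
    _ = (1 / (a * Lm)) * (Ntil + NM * Ltil / Lm) * (η ^ 2 - α₀ ^ 2) * M := by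
        rw [hCdef]; field_simp
end

section
/- Let q* > 0 and let u : [α₀, ξ] → ℝ be a continuous function satisfying the integral equation u(η) = q*·(Φ(ξ, u) − Φ(η, u)) for all η ∈ [α₀, ξ]. Then u is continuously differentiable on (α₀, ξ), and for all η ∈ (α₀, ξ): (i) L*(u(η))·η^ν·u'(η) = −q*·α₀^ν·E(η, u); (ii) the function η ↦ L*(u(η))·η^ν·u'(η) is differentiable with (L*(u(η))·η^ν·u'(η))' + (2/a)·η^{ν+1}·N*(u(η))·u'(η) = 0; (iii) u(ξ) = 0 and the one-sided derivative at α₀ satisfies L*(u(α₀))·u'(α₀) = −q*·E(α₀,u)·α₀^ν/α₀^ν = −q*. -/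
open Real MeasureTheory Set

theorem stmt_7 (a ν α₀ ξ : ℝ) (L N : ℝ → ℝ) (Lm LM Nm NM q : ℝ)
    (ha : 0 < a) (hν0 : 0 < ν) (hν1 : ν < 1) (hα₀ : 0 < α₀) (hαξ : α₀ < ξ)
    (hq : 0 < q)
    (hLcont : Continuous L) (hNcont : Continuous N)
    (hLm : 0 < Lm) (hNm : 0 < Nm)
    (hL : ∀ x : ℝ, Lm ≤ L x ∧ L x ≤ LM)
    (hN : ∀ x : ℝ, Nm ≤ N x ∧ N x ≤ NM)
    (u : ℝ → ℝ) (hu : ContinuousOn u (Icc α₀ ξ))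
    (heq : ∀ η ∈ Icc α₀ ξ, u η = q * (Phi a ν L N α₀ u ξ - Phi a ν L N α₀ u η)) :
    ∃ u' : ℝ → ℝ,
      ContinuousOn u' (Ioo α₀ ξ) ∧
      (∀ η ∈ Ioo α₀ ξ, HasDerivAt u (u' η) η) ∧
      -- (i) `L*(u(η))·η^ν·u'(η) = −q*·α₀^ν·E(η,u)`
      (∀ η ∈ Ioo α₀ ξ,
        L (u η) * η ^ ν * u' η = -q * α₀ ^ ν * Efun a L N α₀ u η) ∧
      -- (ii) `(L*(u(η))·η^ν·u'(η))' + (2/a)·η^{ν+1}·N*(u(η))·u'(η) = 0`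
      (∀ η ∈ Ioo α₀ ξ,
        HasDerivAt (fun t => L (u t) * t ^ ν * u' t)
          (-(2 / a) * η ^ (ν + 1) * N (u η) * u' η) η) ∧
      -- (iii) `u(ξ) = 0` and the one-sided derivative at `α₀` satisfies
      -- `L*(u(α₀))·u'(α₀) = −q*`
      u ξ = 0 ∧
      (∃ d : ℝ, HasDerivWithinAt u d (Ici α₀) α₀ ∧ L (u α₀) * d = -q) := by
  have hLne : ∀ x : ℝ, L x ≠ 0 := fun x => (lt_of_lt_of_le hLm (hL x).1).ne'
  set g : ℝ → ℝ := fun s => s * N (u s) / L (u s) with hgdef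
  have hgcont : ContinuousOn g (Icc α₀ ξ) := by
    apply ContinuousOn.div
    · exact continuousOn_id.mul (hNcont.comp_continuousOn hu)
    · exact hLcont.comp_continuousOn hu
    · exact fun x _ => hLne _
  have hmemIcc : ∀ η ∈ Ioo α₀ ξ, Icc α₀ ξ ∈ nhds η := fun η hη =>
    Icc_mem_nhds hη.1 hη.2
  -- E as a function and its representation
  have hEdef : Efun a L N α₀ u = fun t => Real.exp (-(2 / a) * ∫ s in α₀..t, g s) := rfl
  -- g interval integrable
  have hgint : ∀ t ∈ Icc α₀ ξ, IntervalIntegrable g volume α₀ t := by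
    intro t ht
    apply ContinuousOn.intervalIntegrable
    apply hgcont.mono
    rw [uIcc_of_le ht.1]
    exact Icc_subset_Icc le_rfl ht.2
  -- derivative of G at interior points
  have hG : ∀ η ∈ Ioo α₀ ξ, HasDerivAt (fun t => ∫ s in α₀..t, g s) (g η) η := by
    intro η hη
    apply intervalIntegral.integral_hasDerivAt_right (hgint η (Ioo_subset_Icc_self hη))
    · exact ⟨Icc α₀ ξ, hmemIcc η hη, hgcont.aestronglyMeasurable measurableSet_Icc⟩
    · exact hgcont.continuousAt (hmemIcc η hη)
  -- derivative of E at interior points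
  have hE : ∀ η ∈ Ioo α₀ ξ, HasDerivAt (Efun a L N α₀ u)
      (Efun a L N α₀ u η * (-(2 / a) * g η)) η := by
    intro η hη
    rw [hEdef]
    simpa [mul_comm, mul_left_comm, mul_assoc] using ((hG η hη).const_mul (-(2 / a))).exp
  -- continuity of E on Icc
  have hEcont : ContinuousOn (Efun a L N α₀ u) (Icc α₀ ξ) := by
    rw [hEdef]
    apply Real.continuous_exp.comp_continuousOn
    apply ContinuousOn.const_smul (c := -(2/a)) ?_ |>.congr (fun x hx => rfl)
    have := intervalIntegral.continuousOn_primitive_interval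
      (f := g) (a := α₀) (b := ξ) (μ := volume) ?hint
    · rwa [uIcc_of_le hαξ.le] at this
    · rw [uIcc_of_le hαξ.le]
      exact hgcont.integrableOn_Icc
  -- the integrand of Phi
  set f : ℝ → ℝ := fun v => Efun a L N α₀ u v / (v ^ ν * L (u v)) with hfdef
  have hrpow : Continuous fun v : ℝ => v ^ ν :=
    continuous_iff_continuousAt.2 fun v => Real.continuousAt_rpow_const v ν (Or.inr hν0.le)
  have hden : ContinuousOn (fun v => v ^ ν * L (u v)) (Icc α₀ ξ) :=
    hrpow.continuousOn.mul (hLcont.comp_continuousOn hu)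
  have hdenne : ∀ x ∈ Icc α₀ ξ, x ^ ν * L (u x) ≠ 0 := fun x hx =>
    mul_ne_zero (Real.rpow_pos_of_pos (hα₀.trans_le hx.1) ν).ne' (hLne _)
  have hfcont : ContinuousOn f (Icc α₀ ξ) := hEcont.div hden hdenne
  have hfint : ∀ t ∈ Icc α₀ ξ, IntervalIntegrable f volume α₀ t := by
    intro t ht
    apply ContinuousOn.intervalIntegrable
    apply hfcont.mono
    rw [uIcc_of_le ht.1]
    exact Icc_subset_Icc le_rfl ht.2
  have hPhidef : Phi a ν L N α₀ u = fun t => α₀ ^ ν * ∫ v in α₀..t, f v := rfl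
  -- derivative of Phi at interior points
  have hPhi : ∀ η ∈ Ioo α₀ ξ, HasDerivAt (Phi a ν L N α₀ u) (α₀ ^ ν * f η) η := by
    intro η hη
    rw [hPhidef]
    apply HasDerivAt.const_mul
    apply intervalIntegral.integral_hasDerivAt_right (hfint η (Ioo_subset_Icc_self hη))
    · exact ⟨Icc α₀ ξ, hmemIcc η hη, hfcont.aestronglyMeasurable measurableSet_Icc⟩
    · exact hfcont.continuousAt (hmemIcc η hη)
  -- the candidate derivative
  set u' : ℝ → ℝ := fun t => -q * α₀ ^ ν * Efun a L N α₀ u t / (t ^ ν * L (u t)) with hu'def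
  have hu'eq : ∀ η, q * -(α₀ ^ ν * f η) = u' η := by
    intro η
    simp only [hu'def, hfdef]
    ring
  have hderiv : ∀ η ∈ Ioo α₀ ξ, HasDerivAt u (u' η) η := by
    intro η hη
    have h1 : HasDerivAt (fun t => q * (Phi a ν L N α₀ u ξ - Phi a ν L N α₀ u t))
        (q * -(α₀ ^ ν * f η)) η := ((hPhi η hη).const_sub _).const_mul q
    rw [hu'eq] at h1
    apply h1.congr_of_eventuallyEq
    exact Filter.eventually_of_mem (hmemIcc η hη) fun x hx => heq x hx
  refine ⟨u', ?_, hderiv, ?_, ?_, ?_, ?_⟩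
  · -- continuity of u'
    apply ContinuousOn.div
    · exact continuousOn_const.mul (hEcont.mono Ioo_subset_Icc_self)
    · exact hden.mono Ioo_subset_Icc_self
    · exact fun x hx => hdenne x (Ioo_subset_Icc_self hx)
  · -- (i)
    intro η hη
    have hηpos : 0 < η := hα₀.trans hη.1
    have hrν : η ^ ν ≠ (0:ℝ) := (Real.rpow_pos_of_pos hηpos ν).ne'
    simp only [hu'def]
    field_simp [hLne (u η), hrν]
  · -- (ii)
    intro η hη
    have hηpos : 0 < η := hα₀.trans hη.1
    have key : ∀ᶠ t in nhds η, (fun t => -q * α₀ ^ ν * Efun a L N α₀ u t) t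
        = L (u t) * t ^ ν * u' t := by
      apply Filter.eventually_of_mem (isOpen_Ioi.mem_nhds (show (0:ℝ) < η from hηpos))
      intro t ht
      have htν : t ^ ν ≠ (0:ℝ) := (Real.rpow_pos_of_pos ht ν).ne'
      simp only [hu'def]
      field_simp [hLne (u t), htν]
    have h2 : HasDerivAt (fun t => -q * α₀ ^ ν * Efun a L N α₀ u t)
        (-q * α₀ ^ ν * (Efun a L N α₀ u η * (-(2 / a) * g η))) η :=
      (hE η hη).const_mul _
    have h3 := h2.congr_of_eventuallyEq (key.mono fun t ht => ht.symm)
    refine h3.congr_deriv ?_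
    have hre : η ^ (ν + 1) = η ^ ν * η := by
      rw [Real.rpow_add hηpos, Real.rpow_one]
    rw [hre]
    simp only [hu'def, hgdef]
    have hrν : η ^ ν ≠ (0:ℝ) := (Real.rpow_pos_of_pos hηpos ν).ne'
    field_simp [hLne (u η), hrν]
  · -- u ξ = 0
    rw [heq ξ ⟨hαξ.le, le_rfl⟩]
    ring
  · -- one-sided derivative at α₀
    have hmemIoi : Icc α₀ ξ ∈ nhdsWithin α₀ (Ioi α₀) :=
      mem_nhdsWithin.2 ⟨Iio ξ, isOpen_Iio, hαξ, fun x hx => ⟨le_of_lt hx.2, hx.1.le⟩⟩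
    have hmemIci : Icc α₀ ξ ∈ nhdsWithin α₀ (Ici α₀) :=
      mem_nhdsWithin.2 ⟨Iio ξ, isOpen_Iio, hαξ, fun x hx => ⟨hx.2, hx.1.le⟩⟩
    have hα₀mem : α₀ ∈ Icc α₀ ξ := ⟨le_rfl, hαξ.le⟩
    have hw : HasDerivWithinAt (fun t => ∫ v in α₀..t, f v) (f α₀) (Ici α₀) α₀ := by
      apply intervalIntegral.integral_hasDerivWithinAt_right (hfint α₀ hα₀mem)
        (t := Ioi α₀)
      · exact ⟨Icc α₀ ξ, hmemIoi, hfcont.aestronglyMeasurable measurableSet_Icc⟩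
      · exact (hfcont α₀ hα₀mem).mono_of_mem_nhdsWithin hmemIoi
    have hPw : HasDerivWithinAt (Phi a ν L N α₀ u) (α₀ ^ ν * f α₀) (Ici α₀) α₀ := by
      rw [hPhidef]; exact hw.const_mul _
    have hud : HasDerivWithinAt u (q * -(α₀ ^ ν * f α₀)) (Ici α₀) α₀ := by
      have h1 : HasDerivWithinAt (fun t => q * (Phi a ν L N α₀ u ξ - Phi a ν L N α₀ u t))
          (q * -(α₀ ^ ν * f α₀)) (Ici α₀) α₀ := ((hPw.const_sub _).const_mul q)
      apply h1.congr_of_eventuallyEq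
      · exact Filter.eventually_of_mem hmemIci fun x hx => heq x hx
      · exact heq α₀ hα₀mem
    refine ⟨_, hud, ?_⟩
    have hE0 : Efun a L N α₀ u α₀ = 1 := by
      simp [Efun]
    simp only [hfdef, hE0]
    have hrν : α₀ ^ ν ≠ (0:ℝ) := (Real.rpow_pos_of_pos hα₀ ν).ne'
    field_simp [hLne (u α₀), hrν]
end

section
/- Let p* > 0 and define the operator V on the space of continuous functions on [α₀, ξ] by V(u)(η) = (1 + p*·Φ(η, u))/(1 + p*·Φ(ξ, u)) for η ∈ [α₀, ξ]. Then for all continuous u, u* : [α₀, ξ] → ℝ one has ‖V(u) − V(u*)‖ ≤ 2·p*·Φ̃(α₀, ξ)·‖u − u*‖, where ‖·‖ denotes the supremum norm on [α₀, ξ]. -/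
open Real MeasureTheory Set

/-- The Lipschitz bound `Φ̃(α₀, η)` from Lemma 4. -/
noncomputable def PhiTilde (a ν Lm NM Ltil Ntil α₀ η : ℝ) : ℝ :=
  (α₀ ^ ν / Lm ^ 2) *
    ((1 / a) * (Ntil + NM * Ltil / Lm) *
        (η ^ (3 - ν) / (3 - ν) - α₀ ^ 2 * η ^ (1 - ν) / (1 - ν) +
          2 * α₀ ^ (3 - ν) / ((3 - ν) * (1 - ν))) +
      Ltil * (η ^ (1 - ν) - α₀ ^ (1 - ν)) / (1 - ν))


lemma ratio_diff_le' {A B A' B' : ℝ} (hA : 0 ≤ A) (hAB : A ≤ B) (hA' : 0 ≤ A') (hAB' : A' ≤ B') :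
    |(1 + A) / (1 + B) - (1 + A') / (1 + B')| ≤ |A - A'| + |B - B'| := by
  have hB : (0:ℝ) < 1 + B := by linarith
  have hB' : (0:ℝ) < 1 + B' := by linarith
  rw [div_sub_div _ _ hB.ne' hB'.ne', abs_div, abs_of_pos (mul_pos hB hB'),
    div_le_iff₀ (mul_pos hB hB')]
  have h1 : (1 + A) * (1 + B') - (1 + B) * (1 + A')
      = (A - A') * (1 + B') + (1 + A') * (B' - B) := by ring
  rw [h1]
  have h2 : |(A - A') * (1 + B') + (1 + A') * (B' - B)|
      ≤ |A - A'| * (1 + B') + (1 + A') * |B - B'| := by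
    calc |(A - A') * (1 + B') + (1 + A') * (B' - B)|
        ≤ |(A - A') * (1 + B')| + |(1 + A') * (B' - B)| := abs_add_le _ _
      _ = |A - A'| * (1 + B') + (1 + A') * |B - B'| := by
          rw [abs_mul, abs_mul, abs_of_pos hB', abs_of_pos (by linarith : (0:ℝ) < 1 + A'),
            abs_sub_comm B' B]
  have e1 : |A - A'| * (1 + B') ≤ |A - A'| * ((1 + B) * (1 + B')) := by
    exact mul_le_mul_of_nonneg_left (by nlinarith) (abs_nonneg _)
  have e2 : (1 + A') * |B - B'| ≤ ((1 + B) * (1 + B')) * |B - B'| := by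
    exact mul_le_mul_of_nonneg_right (by nlinarith) (abs_nonneg _)
  nlinarith [h2, e1, e2]

lemma NL_lip' {L N : ℝ → ℝ} {Lm NM Ltil Ntil : ℝ}
    (hLm : 0 < Lm) (hLtil : 0 < Ltil) (hNtil : 0 < Ntil)
    (hL : ∀ x : ℝ, Lm ≤ L x) (hN0 : ∀ x : ℝ, 0 ≤ N x) (hN : ∀ x : ℝ, N x ≤ NM)
    (hLlip : ∀ x y : ℝ, |L x - L y| ≤ Ltil * |x - y|)
    (hNlip : ∀ x y : ℝ, |N x - N y| ≤ Ntil * |x - y|) (x y : ℝ) :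
    |N x / L x - N y / L y| ≤ ((Ntil + NM * Ltil / Lm) / Lm) * |x - y| := by
  have hLx : 0 < L x := lt_of_lt_of_le hLm (hL x)
  have hLy : 0 < L y := lt_of_lt_of_le hLm (hL y)
  have hNM : 0 ≤ NM := le_trans (hN0 y) (hN y)
  calc |N x / L x - N y / L y|
      ≤ |N x / L x - N y / L x| + |N y / L x - N y / L y| := abs_sub_le _ _ _
    _ ≤ (Ntil * |x - y|) / Lm + (NM * (Ltil * |x - y|)) / (Lm * Lm) := by
        gcongr ?_ + ?_
        · rw [div_sub_div_same, abs_div, abs_of_pos hLx]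
          exact div_le_div₀ (by positivity) (hNlip x y) hLm (hL x)
        · have h1 : N y / L x - N y / L y = N y * (L y - L x) / (L x * L y) := by
            field_simp
          rw [h1, abs_div, abs_of_pos (mul_pos hLx hLy), abs_mul,
            abs_of_nonneg (hN0 y), abs_sub_comm (L y) (L x)]
          exact div_le_div₀ (by positivity)
            (mul_le_mul (hN y) (hLlip x y) (abs_nonneg _) hNM)
            (mul_pos hLm hLm) (mul_le_mul (hL x) (hL y) hLm.le hLx.le)
    _ = ((Ntil + NM * Ltil / Lm) / Lm) * |x - y| := by
        field_simp

lemma exp_lip' {s t : ℝ} (hs : s ≤ 0) (ht : t ≤ 0) : |Real.exp s - Real.exp t| ≤ |s - t| := by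
  have key : ∀ x y : ℝ, x ≤ 0 → y ≤ x → Real.exp x - Real.exp y ≤ x - y := by
    intro x y hx hyx
    have h1 : (y - x) + 1 ≤ Real.exp (y - x) := Real.add_one_le_exp _
    have h2 : Real.exp y = Real.exp x * Real.exp (y - x) := by
      rw [← Real.exp_add]; ring_nf
    have h3 : Real.exp x ≤ 1 := Real.exp_le_one_iff.2 hx
    nlinarith [Real.exp_pos x]
  rcases le_total t s with h | h
  · rw [abs_of_nonneg (by nlinarith [Real.exp_le_exp.2 h] : (0:ℝ) ≤ Real.exp s - Real.exp t),
      abs_of_nonneg (by linarith : (0:ℝ) ≤ s - t)]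
    exact key s t hs h
  · rw [abs_of_nonpos (by nlinarith [Real.exp_le_exp.2 h] : Real.exp s - Real.exp t ≤ 0),
      abs_of_nonpos (by linarith : s - t ≤ 0)]
    have := key t s ht h
    linarith

lemma phi_diff_le {a ν α₀ ξ : ℝ} {L N : ℝ → ℝ} {Lm NM Ltil Ntil : ℝ}
    (ha : 0 < a) (hν0 : 0 < ν) (hν1 : ν < 1) (hα₀ : 0 < α₀) (hαξ : α₀ < ξ)
    (hLcont : Continuous L) (hNcont : Continuous N)
    (hLm : 0 < Lm) (hLtil : 0 < Ltil) (hNtil : 0 < Ntil)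
    (hLb : ∀ x : ℝ, Lm ≤ L x) (hN0 : ∀ x : ℝ, 0 ≤ N x) (hNb : ∀ x : ℝ, N x ≤ NM)
    (hLlip : ∀ x y : ℝ, |L x - L y| ≤ Ltil * |x - y|)
    (hNlip : ∀ x y : ℝ, |N x - N y| ≤ Ntil * |x - y|)
    {u ustar : ℝ → ℝ} (hu : ContinuousOn u (Icc α₀ ξ)) (hustar : ContinuousOn ustar (Icc α₀ ξ))
    {M : ℝ} (hM0 : 0 ≤ M) (hM : ∀ x ∈ Icc α₀ ξ, |u x - ustar x| ≤ M)
    {η : ℝ} (hη : η ∈ Icc α₀ ξ) :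
    |Phi a ν L N α₀ u η - Phi a ν L N α₀ ustar η|
      ≤ PhiTilde a ν Lm NM Ltil Ntil α₀ ξ * M := by
  set K := Ntil + NM * Ltil / Lm with hK
  have hNM : 0 ≤ NM := le_trans (hN0 0) (hNb 0)
  have hK0 : 0 < K := by positivity
  have hLpos : ∀ x : ℝ, 0 < L x := fun x => lt_of_lt_of_le hLm (hLb x)
  -- continuity of the inner integrand
  have hfc : ∀ w : ℝ → ℝ, ContinuousOn w (Icc α₀ ξ) →
      ContinuousOn (fun s => s * N (w s) / L (w s)) (Icc α₀ ξ) := by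
    intro w hw
    exact (continuousOn_id.mul (hNcont.comp_continuousOn hw)).div
      (hLcont.comp_continuousOn hw) (fun x _ => (hLpos _).ne')
  have hfint : ∀ (w : ℝ → ℝ), ContinuousOn w (Icc α₀ ξ) → ∀ v ∈ Icc α₀ ξ,
      IntervalIntegrable (fun s => s * N (w s) / L (w s)) volume α₀ v := by
    intro w hw v hv
    apply ContinuousOn.intervalIntegrable
    rw [uIcc_of_le hv.1]
    exact (hfc w hw).mono (Icc_subset_Icc_right hv.2)
  have hf_nonneg : ∀ (w : ℝ → ℝ), ∀ s ∈ Icc α₀ ξ, 0 ≤ s * N (w s) / L (w s) := by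
    intro w s hs
    exact div_nonneg (mul_nonneg (le_trans hα₀.le hs.1) (hN0 _)) (hLpos _).le
  have hInonneg : ∀ (w : ℝ → ℝ), ∀ v ∈ Icc α₀ ξ,
      0 ≤ ∫ s in α₀..v, s * N (w s) / L (w s) := by
    intro w v hv
    apply intervalIntegral.integral_nonneg hv.1
    intro s hs
    exact hf_nonneg w s ⟨hs.1, hs.2.trans hv.2⟩
  have hEarg : ∀ (w : ℝ → ℝ), ∀ v ∈ Icc α₀ ξ,
      -(2 / a) * (∫ s in α₀..v, s * N (w s) / L (w s)) ≤ 0 := by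
    intro w v hv
    have h1 := hInonneg w v hv
    have h2 := mul_nonneg (le_of_lt (div_pos two_pos ha)) h1
    linarith
  have hEle1 : ∀ (w : ℝ → ℝ), ∀ v ∈ Icc α₀ ξ, Efun a L N α₀ w v ≤ 1 := by
    intro w v hv
    exact Real.exp_le_one_iff.2 (hEarg w v hv)
  have hEpos : ∀ (w : ℝ → ℝ) (v : ℝ), 0 < Efun a L N α₀ w v := fun w v => Real.exp_pos _
  -- pointwise bound on the integrand difference
  have key : ∀ v ∈ Icc α₀ ξ,
      |Efun a L N α₀ u v / (v ^ ν * L (u v)) - Efun a L N α₀ ustar v / (v ^ ν * L (ustar v))|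
        ≤ (M / Lm ^ 2) * ((K / a) * (v ^ (2 - ν) - α₀ ^ 2 * v ^ (-ν)) + Ltil * v ^ (-ν)) := by
    intro v hv
    have hv0 : 0 < v := lt_of_lt_of_le hα₀ hv.1
    have hvν : 0 < v ^ ν := rpow_pos_of_pos hv0 ν
    -- integral difference bound
    have hIdiff : |(∫ s in α₀..v, s * N (u s) / L (u s)) -
        (∫ s in α₀..v, s * N (ustar s) / L (ustar s))| ≤ K / Lm * M * ((v ^ 2 - α₀ ^ 2) / 2) := by
      rw [← intervalIntegral.integral_sub (hfint u hu v hv) (hfint ustar hustar v hv)]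
      have hb : IntervalIntegrable (fun t => K / Lm * M * t) volume α₀ v :=
        (continuous_const.mul continuous_id).intervalIntegrable _ _
      have hae : ∀ᵐ t ∂(volume.restrict (Set.uIoc α₀ v)),
          ‖t * N (u t) / L (u t) - t * N (ustar t) / L (ustar t)‖ ≤ K / Lm * M * t := by
        rw [uIoc_of_le hv.1]
        filter_upwards [ae_restrict_mem measurableSet_Ioc] with t ht
        have ht' : t ∈ Icc α₀ ξ := ⟨ht.1.le, ht.2.trans hv.2⟩
        have ht0 : 0 < t := lt_of_lt_of_le hα₀ ht'.1
        have hNL := NL_lip' hLm hLtil hNtil hLb hN0 hNb hLlip hNlip (u t) (ustar t)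
        have hsplit : t * N (u t) / L (u t) - t * N (ustar t) / L (ustar t)
            = t * (N (u t) / L (u t) - N (ustar t) / L (ustar t)) := by ring
        rw [Real.norm_eq_abs, hsplit, abs_mul, abs_of_pos ht0]
        calc t * |N (u t) / L (u t) - N (ustar t) / L (ustar t)|
            ≤ t * (K / Lm * M) := by
              apply mul_le_mul_of_nonneg_left _ ht0.le
              calc |N (u t) / L (u t) - N (ustar t) / L (ustar t)|
                  ≤ (K / Lm) * |u t - ustar t| := hNL
                _ ≤ K / Lm * M := mul_le_mul_of_nonneg_left (hM t ht') (by positivity)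
          _ = K / Lm * M * t := by ring
      have hle := intervalIntegral.norm_integral_le_abs_of_norm_le hae hb
      rw [Real.norm_eq_abs] at hle
      refine le_trans (by exact hle) ?_
      rw [intervalIntegral.integral_const_mul, integral_id]
      rw [abs_of_nonneg (mul_nonneg (mul_nonneg (div_nonneg hK0.le hLm.le) hM0)
        (by nlinarith [hv.1] : (0:ℝ) ≤ (v ^ 2 - α₀ ^ 2) / 2))]
    -- E difference bound
    have hEdiff : |Efun a L N α₀ u v - Efun a L N α₀ ustar v|
        ≤ (2 / a) * (K / Lm * M * ((v ^ 2 - α₀ ^ 2) / 2)) := by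
      simp only [Efun]
      refine le_trans (exp_lip' (hEarg u v hv) (hEarg ustar v hv)) ?_
      have hsplit : -(2 / a) * (∫ s in α₀..v, s * N (u s) / L (u s)) -
          -(2 / a) * (∫ s in α₀..v, s * N (ustar s) / L (ustar s))
          = -(2 / a) * ((∫ s in α₀..v, s * N (u s) / L (u s)) -
              (∫ s in α₀..v, s * N (ustar s) / L (ustar s))) := by ring
      rw [hsplit, abs_mul, abs_neg, abs_of_pos (div_pos two_pos ha)]
      exact mul_le_mul_of_nonneg_left hIdiff (by positivity)
    -- combine
    have hsplit2 : Efun a L N α₀ u v / (v ^ ν * L (u v)) -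
        Efun a L N α₀ ustar v / (v ^ ν * L (ustar v))
        = (v ^ ν)⁻¹ * (Efun a L N α₀ u v / L (u v) - Efun a L N α₀ ustar v / L (ustar v)) := by
      rw [div_mul_eq_div_div_swap, div_mul_eq_div_div_swap, div_eq_inv_mul
        (Efun a L N α₀ u v / L (u v)), div_eq_inv_mul (Efun a L N α₀ ustar v / L (ustar v))]
      ring
    have hinner : |Efun a L N α₀ u v / L (u v) - Efun a L N α₀ ustar v / L (ustar v)|
        ≤ (M / Lm ^ 2) * ((K / a) * (v ^ 2 - α₀ ^ 2) + Ltil) := by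
      have hLu := hLpos (u v)
      have hLs := hLpos (ustar v)
      calc |Efun a L N α₀ u v / L (u v) - Efun a L N α₀ ustar v / L (ustar v)|
          ≤ |Efun a L N α₀ u v / L (u v) - Efun a L N α₀ ustar v / L (u v)|
            + |Efun a L N α₀ ustar v / L (u v) - Efun a L N α₀ ustar v / L (ustar v)| :=
            abs_sub_le _ _ _
        _ ≤ ((2 / a) * (K / Lm * M * ((v ^ 2 - α₀ ^ 2) / 2))) / Lm
            + (1 * (Ltil * M)) / (Lm * Lm) := by
            gcongr ?_ + ?_
            · rw [div_sub_div_same, abs_div, abs_of_pos hLu]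
              exact div_le_div₀ (mul_nonneg (div_nonneg two_pos.le ha.le)
                (mul_nonneg (mul_nonneg (div_nonneg hK0.le hLm.le) hM0)
                  (by nlinarith [hv.1] : (0:ℝ) ≤ (v ^ 2 - α₀ ^ 2) / 2))) hEdiff hLm (hLb _)
            · have h1 : Efun a L N α₀ ustar v / L (u v) - Efun a L N α₀ ustar v / L (ustar v)
                  = Efun a L N α₀ ustar v * (L (ustar v) - L (u v)) / (L (u v) * L (ustar v)) := by
                field_simp
              rw [h1, abs_div, abs_of_pos (mul_pos hLu hLs), abs_mul,
                abs_of_pos (hEpos ustar v), abs_sub_comm (L (ustar v)) (L (u v))]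
              refine div_le_div₀ (by positivity) ?_ (mul_pos hLm hLm)
                (mul_le_mul (hLb _) (hLb _) hLm.le hLu.le)
              exact mul_le_mul (hEle1 ustar v hv)
                (le_trans (hLlip (u v) (ustar v))
                  (mul_le_mul_of_nonneg_left (hM v hv) hLtil.le))
                (abs_nonneg _) zero_le_one
        _ = (M / Lm ^ 2) * ((K / a) * (v ^ 2 - α₀ ^ 2) + Ltil) := by
            field_simp
    have h2ν : v ^ (2 - ν) = v ^ (2:ℕ) * v ^ (-ν) := by
      rw [← Real.rpow_natCast v 2, ← Real.rpow_add hv0]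
      ring_nf
    have hνinv : v ^ (-ν) = (v ^ ν)⁻¹ := Real.rpow_neg hv0.le ν
    have hrhs : (M / Lm ^ 2) * ((K / a) * (v ^ (2 - ν) - α₀ ^ 2 * v ^ (-ν)) + Ltil * v ^ (-ν))
        = (v ^ ν)⁻¹ * ((M / Lm ^ 2) * ((K / a) * (v ^ 2 - α₀ ^ 2) + Ltil)) := by
      rw [h2ν, hνinv]
      ring
    rw [hsplit2, abs_mul, abs_of_pos (by positivity : (0:ℝ) < (v ^ ν)⁻¹), hrhs]
    exact mul_le_mul_of_nonneg_left hinner (by positivity)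
  have hα₀mem : α₀ ∈ Icc α₀ ξ := ⟨le_rfl, hαξ.le⟩
  have hξmem : ξ ∈ Icc α₀ ξ := ⟨hαξ.le, le_rfl⟩
  -- continuity & integrability of the Phi integrands
  have hgc : ∀ (w : ℝ → ℝ), ContinuousOn w (Icc α₀ ξ) →
      ContinuousOn (fun v => Efun a L N α₀ w v / (v ^ ν * L (w v))) (Icc α₀ ξ) := by
    intro w hw
    have hint : IntegrableOn (fun s => s * N (w s) / L (w s)) (uIcc α₀ ξ) volume := by
      rw [uIcc_of_le hαξ.le]
      exact (hfc w hw).integrableOn_compact isCompact_Icc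
    have hIc : ContinuousOn (fun v => ∫ s in α₀..v, s * N (w s) / L (w s)) (Icc α₀ ξ) := by
      have := intervalIntegral.continuousOn_primitive_interval hint
      rwa [uIcc_of_le hαξ.le] at this
    have hE : ContinuousOn (fun v => Efun a L N α₀ w v) (Icc α₀ ξ) := by
      simp only [Efun]
      exact Real.continuous_exp.comp_continuousOn (continuousOn_const.mul hIc)
    refine hE.div ((continuousOn_id.rpow_const ?_).mul (hLcont.comp_continuousOn hw)) ?_
    · exact fun x _ => Or.inr hν0.le
    · intro x hx
      exact (mul_pos (rpow_pos_of_pos (lt_of_lt_of_le hα₀ hx.1) ν) (hLpos _)).ne'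
  have hgint : ∀ (w : ℝ → ℝ), ContinuousOn w (Icc α₀ ξ) → ∀ b c : ℝ, b ∈ Icc α₀ ξ →
      c ∈ Icc α₀ ξ → b ≤ c →
      IntervalIntegrable (fun v => Efun a L N α₀ w v / (v ^ ν * L (w v))) volume b c := by
    intro w hw b c hb hc hbc
    apply ContinuousOn.intervalIntegrable
    rw [uIcc_of_le hbc]
    exact (hgc w hw).mono (Icc_subset_Icc hb.1 hc.2)
  -- the bound function
  set g : ℝ → ℝ := fun v =>
    (M / Lm ^ 2) * ((K / a) * (v ^ (2 - ν) - α₀ ^ 2 * v ^ (-ν)) + Ltil * v ^ (-ν)) with hg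
  have hgcont : ContinuousOn g (Icc α₀ ξ) := by
    have hne : ∀ x ∈ Icc α₀ ξ, x ≠ 0 ∨ True :=
      fun x hx => Or.inl (lt_of_lt_of_le hα₀ hx.1).ne'
    apply continuousOn_const.mul
    apply ContinuousOn.add
    · apply continuousOn_const.mul
      apply ContinuousOn.sub
      · exact continuousOn_id.rpow_const
          (fun x hx => Or.inl (lt_of_lt_of_le hα₀ hx.1).ne')
      · exact continuousOn_const.mul (continuousOn_id.rpow_const
          (fun x hx => Or.inl (lt_of_lt_of_le hα₀ hx.1).ne'))
    · exact continuousOn_const.mul (continuousOn_id.rpow_const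
        (fun x hx => Or.inl (lt_of_lt_of_le hα₀ hx.1).ne'))
  have hg_nonneg : ∀ v ∈ Icc α₀ ξ, 0 ≤ g v := by
    intro v hv
    have hv0 : 0 < v := lt_of_lt_of_le hα₀ hv.1
    have h2ν : v ^ (2 - ν) = v ^ (2:ℕ) * v ^ (-ν) := by
      rw [← Real.rpow_natCast v 2, ← Real.rpow_add hv0]; ring_nf
    have hvν : 0 < v ^ (-ν) := rpow_pos_of_pos hv0 _
    have h1 : (0:ℝ) ≤ v ^ 2 - α₀ ^ 2 := by nlinarith [hv.1]
    rw [hg]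
    simp only
    rw [h2ν, show v ^ (2:ℕ) * v ^ (-ν) - α₀ ^ 2 * v ^ (-ν) = (v ^ 2 - α₀ ^ 2) * v ^ (-ν) from by ring]
    apply mul_nonneg (by positivity)
    exact add_nonneg (mul_nonneg (div_nonneg hK0.le ha.le) (mul_nonneg h1 hvν.le))
      (mul_nonneg hLtil.le hvν.le)
  have hgbint : ∀ b c : ℝ, b ∈ Icc α₀ ξ → c ∈ Icc α₀ ξ → b ≤ c →
      IntervalIntegrable g volume b c := by
    intro b c hb hc hbc
    apply ContinuousOn.intervalIntegrable
    rw [uIcc_of_le hbc]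
    exact hgcont.mono (Icc_subset_Icc hb.1 hc.2)
  have hαν : 0 < α₀ ^ ν := rpow_pos_of_pos hα₀ ν
  have hsub : Phi a ν L N α₀ u η - Phi a ν L N α₀ ustar η
      = α₀ ^ ν * ∫ v in α₀..η, (Efun a L N α₀ u v / (v ^ ν * L (u v))
          - Efun a L N α₀ ustar v / (v ^ ν * L (ustar v))) := by
    simp only [Phi]
    rw [intervalIntegral.integral_sub (hgint u hu α₀ η hα₀mem hη hη.1)
      (hgint ustar hustar α₀ η hα₀mem hη hη.1)]
    ring
  rw [hsub, abs_mul, abs_of_pos hαν]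
  have h1 : |∫ v in α₀..η, (Efun a L N α₀ u v / (v ^ ν * L (u v))
      - Efun a L N α₀ ustar v / (v ^ ν * L (ustar v)))| ≤ |∫ v in α₀..η, g v| := by
    have hae : ∀ᵐ t ∂(volume.restrict (Set.uIoc α₀ η)),
        ‖Efun a L N α₀ u t / (t ^ ν * L (u t))
          - Efun a L N α₀ ustar t / (t ^ ν * L (ustar t))‖ ≤ g t := by
      rw [uIoc_of_le hη.1]
      filter_upwards [ae_restrict_mem measurableSet_Ioc] with t ht
      rw [Real.norm_eq_abs]
      exact key t ⟨ht.1.le, ht.2.trans hη.2⟩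
    have := intervalIntegral.norm_integral_le_abs_of_norm_le hae (hgbint α₀ η hα₀mem hη hη.1)
    rwa [Real.norm_eq_abs] at this
  have h2 : |∫ v in α₀..η, g v| = ∫ v in α₀..η, g v :=
    abs_of_nonneg (intervalIntegral.integral_nonneg hη.1
      (fun x hx => hg_nonneg x ⟨hx.1, hx.2.trans hη.2⟩))
  have h3 : (∫ v in α₀..η, g v) ≤ ∫ v in α₀..ξ, g v := by
    have hadd := intervalIntegral.integral_add_adjacent_intervals
      (hgbint α₀ η hα₀mem hη hη.1) (hgbint η ξ hη hξmem hη.2)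
    have hpos : 0 ≤ ∫ v in η..ξ, g v := intervalIntegral.integral_nonneg hη.2
      (fun x hx => hg_nonneg x ⟨le_trans hη.1 hx.1, hx.2⟩)
    linarith
  have h4 : ∫ v in α₀..ξ, g v = (M / Lm ^ 2) * ((K / a) * ((ξ ^ (3 - ν) - α₀ ^ (3 - ν)) / (3 - ν)
      - α₀ ^ 2 * ((ξ ^ (1 - ν) - α₀ ^ (1 - ν)) / (1 - ν)))
      + Ltil * ((ξ ^ (1 - ν) - α₀ ^ (1 - ν)) / (1 - ν))) := by
    have hi1 : IntervalIntegrable (fun v : ℝ => v ^ (2 - ν)) volume α₀ ξ := by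
      apply ContinuousOn.intervalIntegrable
      exact ContinuousOn.rpow_const continuousOn_id (fun x hx => Or.inr (by linarith))
    have hi2 : IntervalIntegrable (fun v : ℝ => v ^ (-ν)) volume α₀ ξ := by
      apply ContinuousOn.intervalIntegrable
      refine ContinuousOn.rpow_const continuousOn_id (fun x hx => Or.inl ?_)
      rw [uIcc_of_le hαξ.le] at hx
      exact (lt_of_lt_of_le hα₀ hx.1).ne'
    rw [hg]
    simp only
    rw [intervalIntegral.integral_const_mul]
    congr 1
    rw [intervalIntegral.integral_add ((hi1.sub (hi2.const_mul _)).const_mul _)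
      (hi2.const_mul _), intervalIntegral.integral_const_mul, intervalIntegral.integral_const_mul,
      intervalIntegral.integral_sub hi1 (hi2.const_mul _), intervalIntegral.integral_const_mul,
      integral_rpow (Or.inl (by linarith : (-1:ℝ) < 2 - ν)),
      integral_rpow (Or.inl (by linarith : (-1:ℝ) < -ν)),
      show (2 - ν + 1) = 3 - ν from by ring, show (-ν + 1) = 1 - ν from by ring]
    try ring
  have h5 : α₀ ^ ν * ((M / Lm ^ 2) * ((K / a) * ((ξ ^ (3 - ν) - α₀ ^ (3 - ν)) / (3 - ν)
      - α₀ ^ 2 * ((ξ ^ (1 - ν) - α₀ ^ (1 - ν)) / (1 - ν)))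
      + Ltil * ((ξ ^ (1 - ν) - α₀ ^ (1 - ν)) / (1 - ν))))
      = PhiTilde a ν Lm NM Ltil Ntil α₀ ξ * M := by
    have e3 : α₀ ^ (3 - ν) = α₀ ^ (2:ℕ) * α₀ ^ (1 - ν) := by
      rw [← Real.rpow_natCast α₀ 2, ← Real.rpow_add hα₀]; ring_nf
    simp only [PhiTilde, hK]
    rw [e3]
    have h3ν : (3:ℝ) - ν ≠ 0 := by linarith
    have h1ν : (1:ℝ) - ν ≠ 0 := by linarith
    field_simp
    ring
  calc α₀ ^ ν * |∫ v in α₀..η, (Efun a L N α₀ u v / (v ^ ν * L (u v))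
        - Efun a L N α₀ ustar v / (v ^ ν * L (ustar v)))|
      ≤ α₀ ^ ν * (∫ v in α₀..ξ, g v) := by
        apply mul_le_mul_of_nonneg_left _ hαν.le
        calc _ ≤ |∫ v in α₀..η, g v| := h1
          _ = ∫ v in α₀..η, g v := h2
          _ ≤ ∫ v in α₀..ξ, g v := h3
    _ = PhiTilde a ν Lm NM Ltil Ntil α₀ ξ * M := by rw [h4]; exact h5


lemma phi_nonneg {a ν α₀ : ℝ} {L N : ℝ → ℝ} (hα₀ : 0 < α₀) (hLpos : ∀ x : ℝ, 0 < L x)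
    {w : ℝ → ℝ} {η : ℝ} (hαη : α₀ ≤ η) : 0 ≤ Phi a ν L N α₀ w η := by
  simp only [Phi]
  apply mul_nonneg (rpow_nonneg hα₀.le ν)
  apply intervalIntegral.integral_nonneg hαη
  intro v hv
  have hE : (0:ℝ) < Efun a L N α₀ w v := Real.exp_pos _
  exact div_nonneg hE.le
    (mul_nonneg (rpow_nonneg (le_trans hα₀.le hv.1) _) (hLpos _).le)

lemma phi_mono {a ν α₀ ξ : ℝ} {L N : ℝ → ℝ} {Lm : ℝ}
    (hν0 : 0 < ν) (hα₀ : 0 < α₀) (hαξ : α₀ < ξ)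
    (hLcont : Continuous L) (hNcont : Continuous N)
    (hLm : 0 < Lm) (hLb : ∀ x : ℝ, Lm ≤ L x)
    {w : ℝ → ℝ} (hw : ContinuousOn w (Icc α₀ ξ)) {η : ℝ} (hη : η ∈ Icc α₀ ξ) :
    Phi a ν L N α₀ w η ≤ Phi a ν L N α₀ w ξ := by
  have hLpos : ∀ x : ℝ, 0 < L x := fun x => lt_of_lt_of_le hLm (hLb x)
  have hfc : ContinuousOn (fun s => s * N (w s) / L (w s)) (Icc α₀ ξ) :=
    (continuousOn_id.mul (hNcont.comp_continuousOn hw)).div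
      (hLcont.comp_continuousOn hw) (fun x _ => (hLpos _).ne')
  have hgc : ContinuousOn (fun v => Efun a L N α₀ w v / (v ^ ν * L (w v))) (Icc α₀ ξ) := by
    have hint : IntegrableOn (fun s => s * N (w s) / L (w s)) (uIcc α₀ ξ) volume := by
      rw [uIcc_of_le hαξ.le]
      exact hfc.integrableOn_compact isCompact_Icc
    have hIc : ContinuousOn (fun v => ∫ s in α₀..v, s * N (w s) / L (w s)) (Icc α₀ ξ) := by
      have := intervalIntegral.continuousOn_primitive_interval hint
      rwa [uIcc_of_le hαξ.le] at this
    have hE : ContinuousOn (fun v => Efun a L N α₀ w v) (Icc α₀ ξ) := by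
      simp only [Efun]
      exact Real.continuous_exp.comp_continuousOn (continuousOn_const.mul hIc)
    refine hE.div ((continuousOn_id.rpow_const (fun x _ => Or.inr hν0.le)).mul
      (hLcont.comp_continuousOn hw)) ?_
    intro x hx
    exact (mul_pos (rpow_pos_of_pos (lt_of_lt_of_le hα₀ hx.1) ν) (hLpos _)).ne'
  have hgint : ∀ b c : ℝ, b ∈ Icc α₀ ξ → c ∈ Icc α₀ ξ → b ≤ c →
      IntervalIntegrable (fun v => Efun a L N α₀ w v / (v ^ ν * L (w v))) volume b c := by
    intro b c hb hc hbc
    apply ContinuousOn.intervalIntegrable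
    rw [uIcc_of_le hbc]
    exact hgc.mono (Icc_subset_Icc hb.1 hc.2)
  have hα₀mem : α₀ ∈ Icc α₀ ξ := ⟨le_rfl, hαξ.le⟩
  have hξmem : ξ ∈ Icc α₀ ξ := ⟨hαξ.le, le_rfl⟩
  have hadd := intervalIntegral.integral_add_adjacent_intervals
    (hgint α₀ η hα₀mem hη hη.1) (hgint η ξ hη hξmem hη.2)
  have hpos : 0 ≤ ∫ v in η..ξ, Efun a L N α₀ w v / (v ^ ν * L (w v)) := by
    apply intervalIntegral.integral_nonneg hη.2
    intro v hv
    have hE : (0:ℝ) < Efun a L N α₀ w v := Real.exp_pos _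
    exact div_nonneg hE.le (mul_nonneg
      (rpow_nonneg (le_trans hα₀.le (le_trans hη.1 hv.1)) _) (hLpos _).le)
  simp only [Phi]
  apply mul_le_mul_of_nonneg_left _ (rpow_nonneg hα₀.le ν)
  linarith

theorem stmt_10 (a ν α₀ ξ : ℝ) (L N : ℝ → ℝ) (Lm LM Nm NM Ltil Ntil p : ℝ)
    (ha : 0 < a) (hν0 : 0 < ν) (hν1 : ν < 1) (hα₀ : 0 < α₀) (hαξ : α₀ < ξ)
    (hp : 0 < p)
    (hLcont : Continuous L) (hNcont : Continuous N)
    (hLm : 0 < Lm) (hNm : 0 < Nm) (hLtil : 0 < Ltil) (hNtil : 0 < Ntil)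
    (hL : ∀ x : ℝ, Lm ≤ L x ∧ L x ≤ LM)
    (hN : ∀ x : ℝ, Nm ≤ N x ∧ N x ≤ NM)
    (hLlip : ∀ x y : ℝ, |L x - L y| ≤ Ltil * |x - y|)
    (hNlip : ∀ x y : ℝ, |N x - N y| ≤ Ntil * |x - y|) :
    ∀ u ustar : ℝ → ℝ, ContinuousOn u (Icc α₀ ξ) → ContinuousOn ustar (Icc α₀ ξ) →
      supNorm α₀ ξ (fun η =>
          (1 + p * Phi a ν L N α₀ u η) / (1 + p * Phi a ν L N α₀ u ξ) -
            (1 + p * Phi a ν L N α₀ ustar η) / (1 + p * Phi a ν L N α₀ ustar ξ)) ≤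
        2 * p * PhiTilde a ν Lm NM Ltil Ntil α₀ ξ *
          supNorm α₀ ξ (fun η => u η - ustar η) := by
  intro u ustar hu hustar
  have hα₀mem : α₀ ∈ Icc α₀ ξ := ⟨le_rfl, hαξ.le⟩
  have hξmem : ξ ∈ Icc α₀ ξ := ⟨hαξ.le, le_rfl⟩
  have hLpos : ∀ x : ℝ, 0 < L x := fun x => lt_of_lt_of_le hLm (hL x).1
  have hN0 : ∀ x : ℝ, 0 ≤ N x := fun x => le_trans hNm.le (hN x).1
  have hne : Nonempty (Icc α₀ ξ) := ⟨⟨α₀, hα₀mem⟩⟩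
  obtain ⟨C, hC⟩ := IsCompact.exists_bound_of_continuousOn isCompact_Icc (hu.sub hustar)
  set M := supNorm α₀ ξ (fun η => u η - ustar η) with hMdef
  have hbdd : BddAbove (Set.range fun η : Icc α₀ ξ => |u η - ustar η|) := by
    refine ⟨C, ?_⟩
    rintro x ⟨i, rfl⟩
    simpa [Real.norm_eq_abs] using hC i i.2
  have hM : ∀ x ∈ Icc α₀ ξ, |u x - ustar x| ≤ M := by
    intro x hx
    rw [hMdef]
    simp only [supNorm]
    exact le_ciSup hbdd ⟨x, hx⟩
  have hM0 : 0 ≤ M := le_trans (abs_nonneg _) (hM α₀ hα₀mem)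
  simp only [supNorm]
  apply ciSup_le
  rintro ⟨η, hη⟩
  simp only
  have hd : ∀ η' ∈ Icc α₀ ξ, |Phi a ν L N α₀ u η' - Phi a ν L N α₀ ustar η'|
      ≤ PhiTilde a ν Lm NM Ltil Ntil α₀ ξ * M := fun η' hη' =>
    phi_diff_le ha hν0 hν1 hα₀ hαξ hLcont hNcont hLm hLtil hNtil
      (fun x => (hL x).1) hN0 (fun x => (hN x).2) hLlip hNlip hu hustar hM0 hM hη'
  have hmon_u := phi_mono (a := a) (N := N) hν0 hα₀ hαξ hLcont hNcont hLm
    (fun x => (hL x).1) hu (η := η) hη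
  have hmon_s := phi_mono (a := a) (N := N) hν0 hα₀ hαξ hLcont hNcont hLm
    (fun x => (hL x).1) hustar (η := η) hη
  have hnn_u : 0 ≤ Phi a ν L N α₀ u η := phi_nonneg hα₀ hLpos hη.1
  have hnn_s : 0 ≤ Phi a ν L N α₀ ustar η := phi_nonneg hα₀ hLpos hη.1
  have hr := ratio_diff_le' (mul_nonneg hp.le hnn_u)
    (mul_le_mul_of_nonneg_left hmon_u hp.le) (mul_nonneg hp.le hnn_s)
    (mul_le_mul_of_nonneg_left hmon_s hp.le)
  have d1 : |p * Phi a ν L N α₀ u η - p * Phi a ν L N α₀ ustar η|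
      ≤ p * (PhiTilde a ν Lm NM Ltil Ntil α₀ ξ * M) := by
    rw [show p * Phi a ν L N α₀ u η - p * Phi a ν L N α₀ ustar η
      = p * (Phi a ν L N α₀ u η - Phi a ν L N α₀ ustar η) from by ring, abs_mul, abs_of_pos hp]
    exact mul_le_mul_of_nonneg_left (hd η hη) hp.le
  have d2 : |p * Phi a ν L N α₀ u ξ - p * Phi a ν L N α₀ ustar ξ|
      ≤ p * (PhiTilde a ν Lm NM Ltil Ntil α₀ ξ * M) := by
    rw [show p * Phi a ν L N α₀ u ξ - p * Phi a ν L N α₀ ustar ξ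
      = p * (Phi a ν L N α₀ u ξ - Phi a ν L N α₀ ustar ξ) from by ring, abs_mul, abs_of_pos hp]
    exact mul_le_mul_of_nonneg_left (hd ξ hξmem) hp.le
  calc |(1 + p * Phi a ν L N α₀ u η) / (1 + p * Phi a ν L N α₀ u ξ) -
        (1 + p * Phi a ν L N α₀ ustar η) / (1 + p * Phi a ν L N α₀ ustar ξ)|
      ≤ |p * Phi a ν L N α₀ u η - p * Phi a ν L N α₀ ustar η| +
        |p * Phi a ν L N α₀ u ξ - p * Phi a ν L N α₀ ustar ξ| := hr
    _ ≤ 2 * p * PhiTilde a ν Lm NM Ltil Ntil α₀ ξ * M := by linarith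
end

section
/- Let p* > 0 and Ste > 0, and for a continuous function u : [α₀, ξ] → ℝ define φ^c(ξ, u) = a·α₀^ν·E(ξ, u)·Ste/(2·(1 + p*·Φ(ξ, u))). Then for every continuous u one has 0 < φ^c(ξ, u) ≤ (a·α₀^ν·Ste/2)·exp(−(N_m/(a·L_M))·(ξ² − α₀²)). -/
open Real MeasureTheory Set

theorem stmt_12 (a ν α₀ ξ : ℝ) (L N : ℝ → ℝ) (Lm LM Nm NM p Ste : ℝ)
    (ha : 0 < a) (hν0 : 0 < ν) (hν1 : ν < 1) (hα₀ : 0 < α₀) (hαξ : α₀ < ξ)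
    (hp : 0 < p) (hSte : 0 < Ste)
    (hLcont : Continuous L) (hNcont : Continuous N)
    (hLm : 0 < Lm) (hNm : 0 < Nm)
    (hL : ∀ x : ℝ, Lm ≤ L x ∧ L x ≤ LM)
    (hN : ∀ x : ℝ, Nm ≤ N x ∧ N x ≤ NM) :
    ∀ u : ℝ → ℝ, ContinuousOn u (Icc α₀ ξ) →
      0 < a * α₀ ^ ν * Efun a L N α₀ u ξ * Ste /
            (2 * (1 + p * Phi a ν L N α₀ u ξ)) ∧
        a * α₀ ^ ν * Efun a L N α₀ u ξ * Ste /
            (2 * (1 + p * Phi a ν L N α₀ u ξ)) ≤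
          (a * α₀ ^ ν * Ste / 2) *
            Real.exp (-(Nm / (a * LM)) * (ξ ^ 2 - α₀ ^ 2)) := by
  intro u hu
  have hαle : α₀ ≤ ξ := le_of_lt hαξ
  have hLM : 0 < LM := lt_of_lt_of_le (lt_of_lt_of_le hLm (hL 0).1) (hL 0).2
  have hαν : 0 < α₀ ^ ν := Real.rpow_pos_of_pos hα₀ ν
  have hE : 0 < Efun a L N α₀ u ξ := Real.exp_pos _
  -- Phi nonneg
  have hΦ : 0 ≤ Phi a ν L N α₀ u ξ := by
    apply mul_nonneg hαν.le
    apply intervalIntegral.integral_nonneg hαle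
    intro v hv
    have hv0 : 0 < v := lt_of_lt_of_le hα₀ hv.1
    have : 0 < v ^ ν * L (u v) :=
      mul_pos (Real.rpow_pos_of_pos hv0 ν) (lt_of_lt_of_le hLm (hL _).1)
    exact div_nonneg (Real.exp_pos _).le this.le
  have hden : 0 < 2 * (1 + p * Phi a ν L N α₀ u ξ) := by positivity
  have hnum : 0 < a * α₀ ^ ν * Efun a L N α₀ u ξ * Ste := by positivity
  refine ⟨div_pos hnum hden, ?_⟩
  -- integral lower bound
  have hcontI : ContinuousOn (fun s => s * N (u s) / L (u s)) (Icc α₀ ξ) := by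
    apply ContinuousOn.div
    · exact continuousOn_id.mul (hNcont.comp_continuousOn hu)
    · exact hLcont.comp_continuousOn hu
    · intro s hs; exact ne_of_gt (lt_of_lt_of_le hLm (hL _).1)
  have hint1 : IntervalIntegrable (fun s => s * (Nm / LM)) volume α₀ ξ :=
    (continuous_id.mul continuous_const).intervalIntegrable α₀ ξ
  have hint2 : IntervalIntegrable (fun s => s * N (u s) / L (u s)) volume α₀ ξ := by
    apply ContinuousOn.intervalIntegrable
    rwa [uIcc_of_le hαle]
  have hmono : (∫ s in α₀..ξ, s * (Nm / LM)) ≤ ∫ s in α₀..ξ, s * N (u s) / L (u s) := by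
    apply intervalIntegral.integral_mono_on hαle hint1 hint2
    intro s hs
    have hs0 : 0 ≤ s := le_trans hα₀.le hs.1
    have hLs : 0 < L (u s) := lt_of_lt_of_le hLm (hL _).1
    have hdivle : Nm / LM ≤ N (u s) / L (u s) :=
      div_le_div₀ (le_trans hNm.le (hN _).1) (hN _).1 hLs (hL _).2
    calc s * (Nm / LM) ≤ s * (N (u s) / L (u s)) := mul_le_mul_of_nonneg_left hdivle hs0
      _ = s * N (u s) / L (u s) := by ring
  have hIval : (∫ s in α₀..ξ, s * (Nm / LM)) = (Nm / LM) * ((ξ ^ 2 - α₀ ^ 2) / 2) := by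
    rw [intervalIntegral.integral_mul_const, integral_id]
    ring
  have hEbound : Efun a L N α₀ u ξ ≤ Real.exp (-(Nm / (a * LM)) * (ξ ^ 2 - α₀ ^ 2)) := by
    apply Real.exp_le_exp.mpr
    have h2a : 0 < 2 / a := by positivity
    have := mul_le_mul_of_nonneg_left (hIval ▸ hmono) h2a.le
    have heq : (2 / a) * ((Nm / LM) * ((ξ ^ 2 - α₀ ^ 2) / 2)) = (Nm / (a * LM)) * (ξ ^ 2 - α₀ ^ 2) := by
      field_simp
    nlinarith [this]
  calc a * α₀ ^ ν * Efun a L N α₀ u ξ * Ste / (2 * (1 + p * Phi a ν L N α₀ u ξ))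
      ≤ a * α₀ ^ ν * Efun a L N α₀ u ξ * Ste / 2 := by
        apply div_le_div_of_nonneg_left hnum.le (by norm_num)
        nlinarith
    _ = (a * α₀ ^ ν * Ste / 2) * Efun a L N α₀ u ξ := by ring
    _ ≤ (a * α₀ ^ ν * Ste / 2) * Real.exp (-(Nm / (a * LM)) * (ξ ^ 2 - α₀ ^ 2)) := by
        apply mul_le_mul_of_nonneg_left hEbound (by positivity)
end
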